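/- Let T be a bounded injective totally paranormal operator with ker(T*) = {0}. Then the minimum modulus m(T) = inf{‖Tx‖ : ‖x‖ = 1} equals the distance d(0, σ(T)) from 0 to the spectrum of T. -/

import Mathlib

open Filter ENNReal

/-- An injective paranormal operator attains its norm as a spectral value. -/
theorem paranormal_exists_spec {H : Type*} [NormedAddCommGroup H] [InnerProductSpace ℂ H]
    [CompleteSpace H] [Nontrivial H] (A : H →L[ℂ] H)
    (hinj : Function.Injective A)
    (hpar : ∀ x : H, ‖A x‖ ^ 2 ≤ ‖A (A x)‖ * ‖x‖) :
    ∃ μ ∈ spectrum ℂ A, ‖A‖ ≤ ‖μ‖ := by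
  -- powers are injective
  have hpowinj : ∀ n : ℕ, Function.Injective (A ^ n) := by
    intro n
    induction n with
    | zero => intro a b h; simpa [ContinuousLinearMap.one_apply] using h
    | succ n ih =>
      intro a b h
      rw [pow_succ] at h
      simp only [ContinuousLinearMap.mul_apply] at h
      exact hinj (ih h)
  -- key growth estimate
  have estep : ∀ (x : H) (m : ℕ), A ((A ^ m) x) = (A ^ (m + 1)) x := by
    intro x m
    rw [pow_succ']
    rfl
  have key : ∀ x : H, ‖x‖ = 1 → ∀ n : ℕ, ‖A x‖ * ‖(A ^ n) x‖ ≤ ‖(A ^ (n + 1)) x‖ := by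
    intro x hx1 n
    have hx : x ≠ 0 := by intro h; rw [h] at hx1; simp at hx1
    induction n with
    | zero => simp [ContinuousLinearMap.one_apply, pow_zero, hx1]
    | succ n ih =>
      have hpos : 0 < ‖(A ^ n) x‖ := by
        rw [norm_pos_iff]
        intro h
        exact hx (hpowinj n (by simpa using h))
      have hp := hpar ((A ^ n) x)
      rw [estep, estep] at hp
      -- hp : ‖A^(n+1) x‖^2 ≤ ‖A^(n+2) x‖ * ‖A^n x‖
      have h3 : (‖A x‖ * ‖(A ^ (n + 1)) x‖) * ‖(A ^ n) x‖ ≤ ‖(A ^ (n + 2)) x‖ * ‖(A ^ n) x‖ := by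
        calc (‖A x‖ * ‖(A ^ (n + 1)) x‖) * ‖(A ^ n) x‖
            = (‖A x‖ * ‖(A ^ n) x‖) * ‖(A ^ (n + 1)) x‖ := by ring
          _ ≤ ‖(A ^ (n + 1)) x‖ * ‖(A ^ (n + 1)) x‖ := by
              apply mul_le_mul_of_nonneg_right ih (norm_nonneg _)
          _ = ‖(A ^ (n + 1)) x‖ ^ 2 := by ring
          _ ≤ ‖(A ^ (n + 2)) x‖ * ‖(A ^ n) x‖ := hp
      exact le_of_mul_le_mul_right (by exact_mod_cast h3) hpos
  have growth : ∀ x : H, ‖x‖ = 1 → ∀ n : ℕ, ‖A x‖ ^ n ≤ ‖(A ^ n) x‖ := by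
    intro x hx n
    induction n with
    | zero => simp [ContinuousLinearMap.one_apply, hx]
    | succ n ih =>
      calc ‖A x‖ ^ (n + 1) = ‖A x‖ * ‖A x‖ ^ n := by ring
        _ ≤ ‖A x‖ * ‖(A ^ n) x‖ := by
            apply mul_le_mul_of_nonneg_left ih (norm_nonneg _)
        _ ≤ ‖(A ^ (n + 1)) x‖ := key x hx n
  -- spectral radius ≥ ‖A x‖ for every unit x
  have hr : ∀ x : H, ‖x‖ = 1 → (‖A x‖₊ : ℝ≥0∞) ≤ spectralRadius ℂ A := by
    intro x hx
    refine ge_of_tendsto (spectrum.pow_nnnorm_pow_one_div_tendsto_nhds_spectralRadius A) ?_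
    filter_upwards [eventually_ge_atTop 1] with n hn
    have h1 : ‖A x‖₊ ^ n ≤ ‖A ^ n‖₊ := by
      rw [← NNReal.coe_le_coe]
      push_cast
      calc ‖A x‖ ^ n ≤ ‖(A ^ n) x‖ := growth x hx n
        _ ≤ ‖A ^ n‖ * ‖x‖ := (A ^ n).le_opNorm x
        _ = ‖A ^ n‖ := by rw [hx, mul_one]
    have h2 : ((‖A x‖₊ : ℝ≥0∞) ^ n) ^ (1 / n : ℝ) ≤ ((‖A ^ n‖₊ : ℝ≥0∞)) ^ (1 / n : ℝ) := by
      apply ENNReal.rpow_le_rpow _ (by positivity)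
      exact_mod_cast ENNReal.coe_le_coe.mpr h1
    calc (‖A x‖₊ : ℝ≥0∞) = ((‖A x‖₊ : ℝ≥0∞) ^ n) ^ (1 / n : ℝ) := by
          rw [← ENNReal.rpow_natCast _ n, ← ENNReal.rpow_mul,
            mul_one_div_cancel (by exact_mod_cast Nat.one_le_iff_ne_zero.mp hn), ENNReal.rpow_one]
      _ ≤ ((‖A ^ n‖₊ : ℝ≥0∞)) ^ (1 / n : ℝ) := h2
  obtain ⟨μ, hμσ, hμr⟩ := spectrum.exists_nnnorm_eq_spectralRadius (a := A)
  refine ⟨μ, hμσ, ?_⟩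
  apply A.opNorm_le_bound (norm_nonneg μ)
  intro x
  rcases eq_or_ne x 0 with rfl | hx0
  · simp
  · have hu : ‖(‖x‖⁻¹ • x)‖ = 1 := by
      rw [norm_smul, norm_inv, norm_norm, inv_mul_cancel₀ (norm_ne_zero_iff.mpr hx0)]
    have := hr _ hu
    rw [← hμr] at this
    have hle : ‖A (‖x‖⁻¹ • x)‖ ≤ ‖μ‖ := by
      have := ENNReal.coe_le_coe.mp (le_of_le_of_eq this rfl)
      exact_mod_cast this
    rw [A.map_smul_of_tower, norm_smul, norm_inv, norm_norm] at hle
    have hxpos : (0:ℝ) < ‖x‖ := norm_pos_iff.mpr hx0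
    calc ‖A x‖ = ‖x‖ * (‖x‖⁻¹ * ‖A x‖) := by field_simp
      _ ≤ ‖x‖ * ‖μ‖ := by exact mul_le_mul_of_nonneg_left hle (le_of_lt hxpos)
      _ = ‖μ‖ * ‖x‖ := by ring

open Filter ENNReal ContinuousLinearMap

theorem stmt_14 {H : Type*} [NormedAddCommGroup H] [InnerProductSpace ℂ H]
    [CompleteSpace H] [Nontrivial H] (T : H →L[ℂ] H)
    (hT : ∀ (lam : ℂ) (x : H),
      ‖(T - lam • 1) x‖ ^ 2 ≤ ‖((T - lam • 1) ∘L (T - lam • 1)) x‖ * ‖x‖)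
    (hker : LinearMap.ker (T : H →ₗ[ℂ] H) = ⊥)
    (hker' : LinearMap.ker (ContinuousLinearMap.adjoint T : H →ₗ[ℂ] H) = ⊥) :
    sInf {c : ℝ | ∃ x : H, ‖x‖ = 1 ∧ c = ‖T x‖} =
      sInf {c : ℝ | ∃ lam ∈ spectrum ℂ T, c = ‖lam‖} := by
  set S := {c : ℝ | ∃ x : H, ‖x‖ = 1 ∧ c = ‖T x‖} with hSdef
  set Sig := {c : ℝ | ∃ lam ∈ spectrum ℂ T, c = ‖lam‖} with hSigdef
  obtain ⟨x₀, hx₀⟩ : ∃ x : H, ‖x‖ = 1 := by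
    obtain ⟨x, hx⟩ := NormedSpace.sphere_nonempty (E := H) (x := 0) (r := 1) |>.mpr zero_le_one
    exact ⟨x, by simpa using hx⟩
  have hSne : S.Nonempty := ⟨‖T x₀‖, x₀, hx₀, rfl⟩
  have hSbd : BddBelow S := ⟨0, by rintro c ⟨x, hx, rfl⟩; exact norm_nonneg _⟩
  have hSigne : Sig.Nonempty := by
    obtain ⟨l, hl⟩ := spectrum.nonempty T
    exact ⟨‖l‖, l, hl, rfl⟩
  have hSigbd : BddBelow Sig := ⟨0, by rintro c ⟨l, hl, rfl⟩; exact norm_nonneg l⟩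
  by_cases hu : IsUnit T
  · -- invertible case
    obtain ⟨u, hu⟩ := hu
    set A : H →L[ℂ] H := ↑u⁻¹ with hA
    have hTA : ∀ x : H, T (A x) = x := by
      intro x
      have h1 : ((u : H →L[ℂ] H) * (↑u⁻¹ : H →L[ℂ] H)) x = x := by
        rw [u.mul_inv]; exact ContinuousLinearMap.one_apply x
      simpa [hu, ContinuousLinearMap.mul_apply] using h1
    have hAT : ∀ x : H, A (T x) = x := by
      intro x
      have h1 : (((↑u⁻¹ : H →L[ℂ] H)) * (u : H →L[ℂ] H)) x = x := by
        rw [u.inv_mul]; exact ContinuousLinearMap.one_apply x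
      simpa [hu, ContinuousLinearMap.mul_apply] using h1
    have hApar : ∀ x : H, ‖A x‖ ^ 2 ≤ ‖A (A x)‖ * ‖x‖ := by
      intro x
      have h := hT 0 (A (A x))
      simp only [zero_smul, sub_zero, ContinuousLinearMap.comp_apply] at h
      rw [hTA (A x), hTA x] at h
      rw [mul_comm]
      exact h
    have hAinj : Function.Injective A := fun a b hab => by rw [← hTA a, ← hTA b, hab]
    obtain ⟨μ, hμσ, hμA⟩ := paranormal_exists_spec A hAinj hApar
    have hμA' : ‖μ‖ ≤ ‖A‖ := by
      exact spectrum.norm_le_norm_of_mem hμσ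
    have hμeq : ‖μ‖ = ‖A‖ := le_antisymm hμA' hμA
    have hApos : 0 < ‖A‖ := by
      rw [norm_pos_iff]
      intro h
      have : x₀ = 0 := by rw [← hAT x₀, h]; simp
      rw [this] at hx₀; simp at hx₀
    have hμ0 : μ ≠ 0 := by
      intro h
      rw [h] at hμeq; simp at hμeq
      exact absurd hμeq.symm (ne_of_gt hApos)
    have hinvmem : ∀ lam : ℂ, lam ≠ 0 → (lam ∈ spectrum ℂ T ↔ lam⁻¹ ∈ spectrum ℂ A) := by
      intro lam hlam
      have base := spectrum.inv_mem_iff (R := ℂ) (r := Units.mk0 lam hlam) (a := u)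
      rw [Units.val_inv_eq_inv_val, Units.val_mk0, hu, ← hA] at base
      exact base
    -- m = ‖A‖⁻¹
    have hm_lb : ∀ c ∈ S, ‖A‖⁻¹ ≤ c := by
      rintro c ⟨x, hx, rfl⟩
      have h1 : ‖A (T x)‖ ≤ ‖A‖ * ‖T x‖ := A.le_opNorm _
      rw [hAT x, hx] at h1
      rw [← one_div, div_le_iff₀ hApos]
      nlinarith [h1]
    have hm_ge : ‖A‖⁻¹ ≤ sInf S := le_csInf hSne hm_lb
    have hm_le : sInf S ≤ ‖A‖⁻¹ := by
      by_contra hlt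
      push_neg at hlt
      have hSpos : 0 < sInf S := lt_of_le_of_lt (inv_nonneg.mpr hApos.le) hlt
      set r : ℝ := ((sInf S)⁻¹ + ‖A‖) / 2 with hrdef
      have h1 : (sInf S)⁻¹ < ‖A‖ := by
        have := inv_strictAnti₀ (inv_pos.mpr hApos) hlt
        rwa [inv_inv] at this
      have hSinvpos : 0 < (sInf S)⁻¹ := inv_pos.mpr hSpos
      have hr1 : (sInf S)⁻¹ < r := by rw [hrdef]; linarith
      have hr2 : r < ‖A‖ := by rw [hrdef]; linarith
      have hrpos : 0 < r := lt_trans hSinvpos hr1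
      have hnot : ¬ ∀ y : H, ‖A y‖ ≤ r * ‖y‖ := by
        intro hall
        exact absurd (A.opNorm_le_bound hrpos.le hall) (not_le.mpr hr2)
      push_neg at hnot
      obtain ⟨y, hy⟩ := hnot
      have hAy : 0 < ‖A y‖ := lt_of_le_of_lt (by positivity) hy
      set x := ‖A y‖⁻¹ • (A y) with hxdef
      have hxn : ‖x‖ = 1 := by
        rw [hxdef, norm_smul, norm_inv, norm_norm, inv_mul_cancel₀ hAy.ne']
      have hTx : T x = ‖A y‖⁻¹ • y := by rw [hxdef, T.map_smul_of_tower, hTA]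
      have hTxn : ‖T x‖ ≤ r⁻¹ := by
        rw [hTx, norm_smul, norm_inv, norm_norm]
        have h2 : ‖y‖ * r ≤ ‖A y‖ := by nlinarith
        calc ‖A y‖⁻¹ * ‖y‖ ≤ ‖A y‖⁻¹ * (‖A y‖ / r) :=
              mul_le_mul_of_nonneg_left ((le_div_iff₀ hrpos).mpr h2) (inv_nonneg.mpr hAy.le)
          _ = r⁻¹ := by field_simp
      have hle : sInf S ≤ r⁻¹ := le_trans (csInf_le hSbd ⟨x, hxn, rfl⟩) hTxn
      have hgt : r⁻¹ < sInf S := by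
        have := inv_strictAnti₀ hSinvpos hr1
        rwa [inv_inv] at this
      linarith
    have hm : sInf S = ‖A‖⁻¹ := le_antisymm hm_le hm_ge
    -- d = ‖A‖⁻¹
    have hd_lb : ∀ c ∈ Sig, ‖A‖⁻¹ ≤ c := by
      rintro c ⟨lam, hlam, rfl⟩
      have hlam0 : lam ≠ 0 := by
        rintro rfl
        exact (spectrum.zero_mem_iff ℂ).mp hlam (hu ▸ u.isUnit)
      have hmem := (hinvmem lam hlam0).mp hlam
      have h1 : ‖lam⁻¹‖ ≤ ‖A‖ := spectrum.norm_le_norm_of_mem hmem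
      rw [norm_inv] at h1
      have hlp : 0 < ‖lam‖ := norm_pos_iff.mpr hlam0
      have := inv_anti₀ (inv_pos.mpr hlp) h1
      rwa [inv_inv] at this
    have hd_ge : ‖A‖⁻¹ ≤ sInf Sig := le_csInf hSigne hd_lb
    have hd_le : sInf Sig ≤ ‖A‖⁻¹ := by
      have hmemT : μ⁻¹ ∈ spectrum ℂ T :=
        (hinvmem μ⁻¹ (inv_ne_zero hμ0)).mpr (by rwa [inv_inv])
      have habs : ‖μ⁻¹‖ = ‖A‖⁻¹ := by rw [norm_inv, hμeq]
      calc sInf Sig ≤ ‖μ⁻¹‖ := csInf_le hSigbd ⟨μ⁻¹, hmemT, rfl⟩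
        _ = ‖A‖⁻¹ := habs
    rw [hm, le_antisymm hd_le hd_ge]
  · -- non-invertible case: both infima are zero
    have hd0 : sInf Sig = 0 := by
      apply le_antisymm
      · exact csInf_le hSigbd ⟨0, (spectrum.zero_mem_iff ℂ).mpr hu, by simp⟩
      · exact le_csInf hSigne (by rintro c ⟨l, hl, rfl⟩; exact norm_nonneg l)
    have hm0 : sInf S = 0 := by
      by_contra hm
      have hge : 0 ≤ sInf S := le_csInf hSne (by rintro c ⟨x, hx, rfl⟩; exact norm_nonneg _)
      have hpos : 0 < sInf S := lt_of_le_of_ne hge (Ne.symm hm)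
      have hbound : ∀ x : H, ‖x‖ ≤ (sInf S)⁻¹ * ‖T x‖ := by
        intro x
        rcases eq_or_ne x 0 with rfl | hx0
        · simp
        · have hxpos : 0 < ‖x‖ := norm_pos_iff.mpr hx0
          have hun : ‖(‖x‖⁻¹ • x)‖ = 1 := by
            rw [norm_smul, norm_inv, norm_norm, inv_mul_cancel₀ hxpos.ne']
          have h1 : sInf S ≤ ‖T (‖x‖⁻¹ • x)‖ := csInf_le hSbd ⟨_, hun, rfl⟩
          rw [T.map_smul_of_tower, norm_smul, norm_inv, norm_norm] at h1
          have h2 : ‖x‖ * sInf S ≤ ‖x‖ * (‖x‖⁻¹ * ‖T x‖) :=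
            mul_le_mul_of_nonneg_left h1 hxpos.le
          rw [← mul_assoc, mul_inv_cancel₀ hxpos.ne', one_mul] at h2
          rw [mul_comm ‖x‖ (sInf S)] at h2
          calc ‖x‖ = (sInf S)⁻¹ * (sInf S * ‖x‖) := by field_simp
            _ ≤ (sInf S)⁻¹ * ‖T x‖ :=
                mul_le_mul_of_nonneg_left h2 (inv_nonneg.mpr hpos.le)
      have hbound' : ∀ x : H, ‖x‖ ≤ ((Real.toNNReal (sInf S)⁻¹ : NNReal) : ℝ) * ‖T x‖ := by
        intro x
        rw [Real.coe_toNNReal _ (inv_nonneg.mpr hpos.le)]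
        exact hbound x
      have hanti := ContinuousLinearMap.antilipschitz_of_bound T hbound'
      have hclosed : IsClosed (Set.range ⇑T) := hanti.isClosed_range T.uniformContinuous
      have hclosed' : IsClosed ((LinearMap.range (T : H →ₗ[ℂ] H) : Submodule ℂ H) : Set H) := by
        have : ((LinearMap.range (T : H →ₗ[ℂ] H) : Submodule ℂ H) : Set H) = Set.range ⇑T := by
          ext z; simp [LinearMap.mem_range]
        rw [this]; exact hclosed
      have horth : (LinearMap.range (T : H →ₗ[ℂ] H) : Submodule ℂ H)ᗮ = ⊥ := by
        rw [Submodule.eq_bot_iff]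
        intro y hy
        have h1 : ∀ x : H, (inner ℂ (T x) y : ℂ) = 0 := by
          intro x
          exact hy (T x) (LinearMap.mem_range.mpr ⟨x, rfl⟩)
        have h2 : (inner ℂ (ContinuousLinearMap.adjoint T y) (ContinuousLinearMap.adjoint T y) : ℂ) = 0 := by
          rw [ContinuousLinearMap.adjoint_inner_left, ← inner_conj_symm, h1, map_zero]
        have h3 : ContinuousLinearMap.adjoint T y = 0 := inner_self_eq_zero.mp h2
        have h4 : y ∈ LinearMap.ker (ContinuousLinearMap.adjoint T : H →ₗ[ℂ] H) := h3
        rw [hker'] at h4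
        simpa using h4
      have htop : (LinearMap.range (T : H →ₗ[ℂ] H) : Submodule ℂ H) = ⊤ := by
        have h1 := (Submodule.topologicalClosure_eq_top_iff
          (K := (LinearMap.range (T : H →ₗ[ℂ] H) : Submodule ℂ H))).mpr horth
        rwa [hclosed'.submodule_topologicalClosure_eq] at h1
      apply hu
      rw [ContinuousLinearMap.isUnit_iff_bijective]
      exact ⟨LinearMap.ker_eq_bot.mp hker, LinearMap.range_eq_top.mp htop⟩
    rw [hm0, hd0]
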